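/- Let β ∈ (0,1) and T > 0. Then there exists a constant C = C(β, T) such that for every τ ∈ (0,1) and every integer n ≥ 2 with nτ ≤ T, setting t_k = kτ, one has Σ_{k=2}^{n} (t_{n+1} − t_k)^{β−1} · log( k/(k−1) ) ≤ C (1 + |log τ|) t_n^{β−1}. -/

import Mathlib

open Finset

private lemma key_step (β : ℝ) (hβ0 : 0 < β) (hβ1 : β ≤ 1) (m : ℕ) :
    β * ((m : ℝ) + 1) ^ (β - 1) + (m : ℝ) ^ β ≤ ((m : ℝ) + 1) ^ β := by
  set a : ℝ := (m : ℝ) + 1 with ha_def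
  have hm0 : (0 : ℝ) ≤ (m : ℝ) := Nat.cast_nonneg m
  have ha1 : 1 ≤ a := by simp only [ha_def]; linarith
  have ha0 : 0 < a := by linarith
  have h1a : 1 / a ≤ 1 := by rw [div_le_one ha0]; exact ha1
  have h1a0 : 0 < 1 / a := by positivity
  have hs : -1 ≤ -1 / a := by rw [neg_div]; linarith
  have hm : (m : ℝ) = a * (1 + (-1 / a)) := by field_simp; rw [ha_def]; ring
  have hber : (1 + (-1 / a)) ^ β ≤ 1 + β * (-1 / a) :=
    rpow_one_add_le_one_add_mul_self hs hβ0.le hβ1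
  have hnn : 0 ≤ 1 + (-1 / a) := by rw [neg_div]; linarith
  have h2 : (m : ℝ) ^ β = a ^ β * (1 + (-1 / a)) ^ β := by
    rw [hm, Real.mul_rpow ha0.le hnn]
  have h3 : a ^ (β - 1) = a ^ β / a := Real.rpow_sub_one ha0.ne' β
  have hpow : 0 ≤ a ^ β := Real.rpow_nonneg ha0.le β
  have h4 : a ^ β * (1 + (-1 / a)) ^ β ≤ a ^ β * (1 + β * (-1 / a)) :=
    mul_le_mul_of_nonneg_left hber hpow
  rw [h2, h3]
  have h5 : β * (a ^ β / a) + a ^ β * (1 + β * (-1 / a)) = a ^ β := by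
    field_simp; ring
  linarith

private lemma sum_pow_le (β : ℝ) (hβ0 : 0 < β) (hβ1 : β ≤ 1) (m : ℕ) :
    ∑ i ∈ range m, ((i : ℝ) + 1) ^ (β - 1) ≤ (m : ℝ) ^ β / β := by
  induction m with
  | zero => simp [Real.zero_rpow hβ0.ne']
  | succ m ih =>
    rw [sum_range_succ, le_div_iff₀ hβ0]
    rw [le_div_iff₀ hβ0] at ih
    have hk := key_step β hβ0 hβ1 m
    push_cast
    nlinarith

private lemma sum_rev_le (β : ℝ) (hβ0 : 0 < β) (hβ1 : β ≤ 1) (m : ℕ) :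
    ∑ i ∈ range m, ((m - i : ℕ) : ℝ) ^ (β - 1) ≤ (m : ℝ) ^ β / β := by
  have h := Finset.sum_range_reflect (fun j => (((j : ℝ) + 1)) ^ (β - 1)) m
  calc ∑ i ∈ range m, ((m - i : ℕ) : ℝ) ^ (β - 1)
      = ∑ j ∈ range m, (((j : ℝ) + 1)) ^ (β - 1) := by
        rw [← h]
        refine Finset.sum_congr rfl fun i hi => ?_
        simp only [mem_range] at hi
        have he : (m - i : ℕ) = (m - 1 - i) + 1 := by omega
        rw [he]; push_cast; ring_nf
    _ ≤ (m : ℝ) ^ β / β := sum_pow_le β hβ0 hβ1 m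

private lemma log_telescope : ∀ m : ℕ, 2 ≤ m →
    ∑ k ∈ Finset.Icc 2 m, Real.log ((k : ℝ) / ((k : ℝ) - 1)) = Real.log m := by
  intro m hm
  induction m, hm using Nat.le_induction with
  | base => norm_num
  | succ m hm ih =>
    rw [Finset.sum_Icc_succ_top (by omega : 2 ≤ m + 1), ih]
    have hm0 : (0 : ℝ) < (m : ℝ) := by
      have : (2 : ℝ) ≤ (m : ℝ) := by exact_mod_cast hm
      linarith
    push_cast
    rw [show ((m : ℝ) + 1) - 1 = (m : ℝ) by ring,
      Real.log_div (by linarith) hm0.ne']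
    ring

/-- Discrete weakly singular logarithmic sum bound from the paper's proof of Lemma 4.15:
on the uniform grid `t_k = kτ`, `Σ_{k=2}^n (t_{n+1}-t_k)^{β-1} log(k/(k-1))
≤ C (1+|log τ|) t_n^{β-1}`. -/
theorem stmt_10 (β T : ℝ) (hβ0 : 0 < β) (hβ1 : β < 1) (hT : 0 < T) :
    ∃ C : ℝ, 0 < C ∧ ∀ τ : ℝ, 0 < τ → τ < 1 → ∀ n : ℕ, 2 ≤ n → (n : ℝ) * τ ≤ T →
      (∑ k ∈ Finset.Icc 2 n,
          (((n + 1 - k : ℕ) : ℝ) * τ) ^ (β - 1) * Real.log ((k : ℝ) / ((k : ℝ) - 1)))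
        ≤ C * (1 + |Real.log τ|) * ((n : ℝ) * τ) ^ (β - 1) := by
  refine ⟨2 / β + 2 + 2 * |Real.log T|, by positivity, ?_⟩
  intro τ hτ0 hτ1 n hn hnT
  have hn2 : (2 : ℝ) ≤ (n : ℝ) := by exact_mod_cast hn
  have hn0 : (0 : ℝ) < (n : ℝ) := by linarith
  have hβ1' : β - 1 ≤ 0 := by linarith
  have hτp : (0 : ℝ) ≤ τ ^ (β - 1) := Real.rpow_nonneg hτ0.le _
  have hlogpos : ∀ k ∈ Finset.Icc 2 n, 0 ≤ Real.log ((k : ℝ) / ((k : ℝ) - 1)) := by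
    intro k hk
    simp only [mem_Icc] at hk
    have hk2 : (2 : ℝ) ≤ (k : ℝ) := by exact_mod_cast hk.1
    apply Real.log_nonneg
    rw [le_div_iff₀ (by linarith)]; linarith
  have hcast : ∀ k ∈ Finset.Icc 2 n, ((n + 1 - k : ℕ) : ℝ) = (n : ℝ) + 1 - (k : ℝ) := by
    intro k hk
    simp only [mem_Icc] at hk
    have hkn : (k : ℕ) ≤ n + 1 := by omega
    push_cast [Nat.cast_sub hkn]; ring
  set S := ∑ k ∈ Finset.Icc 2 n,
      ((n + 1 - k : ℕ) : ℝ) ^ (β - 1) * Real.log ((k : ℝ) / ((k : ℝ) - 1)) with hS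
  have hsplit : (∑ k ∈ Finset.Icc 2 n,
      (((n + 1 - k : ℕ) : ℝ) * τ) ^ (β - 1) * Real.log ((k : ℝ) / ((k : ℝ) - 1)))
      = S * τ ^ (β - 1) := by
    rw [hS, Finset.sum_mul]
    refine Finset.sum_congr rfl fun k hk => ?_
    rw [Real.mul_rpow (Nat.cast_nonneg _) hτ0.le]; ring
  have hrhs : ((n : ℝ) * τ) ^ (β - 1) = (n : ℝ) ^ (β - 1) * τ ^ (β - 1) :=
    Real.mul_rpow hn0.le hτ0.le
  rw [hsplit, hrhs, ← mul_assoc]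
  refine mul_le_mul_of_nonneg_right ?_ hτp
  have hnp : (0 : ℝ) ≤ (n : ℝ) ^ (β - 1) := Real.rpow_nonneg hn0.le _
  have hfilter := Finset.sum_filter_add_sum_filter_not (Finset.Icc 2 n)
    (fun k => n ≤ 2 * (k - 1))
    (fun k => ((n + 1 - k : ℕ) : ℝ) ^ (β - 1) * Real.log ((k : ℝ) / ((k : ℝ) - 1)))
  -- Part A : k with n ≤ 2(k-1)
  have hA : ∑ k ∈ (Finset.Icc 2 n).filter (fun k => n ≤ 2 * (k - 1)),
      ((n + 1 - k : ℕ) : ℝ) ^ (β - 1) * Real.log ((k : ℝ) / ((k : ℝ) - 1))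
      ≤ (2 / β) * (n : ℝ) ^ (β - 1) := by
    have step1 : ∀ k ∈ (Finset.Icc 2 n).filter (fun k => n ≤ 2 * (k - 1)),
        ((n + 1 - k : ℕ) : ℝ) ^ (β - 1) * Real.log ((k : ℝ) / ((k : ℝ) - 1))
        ≤ ((n + 1 - k : ℕ) : ℝ) ^ (β - 1) * (2 / (n : ℝ)) := by
      intro k hk
      simp only [mem_filter, mem_Icc] at hk
      have hk2 : (2 : ℝ) ≤ (k : ℝ) := by exact_mod_cast hk.1.1
      have hkp : (0 : ℝ) < (k : ℝ) - 1 := by linarith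
      have hdivpos : (0 : ℝ) < (k : ℝ) / ((k : ℝ) - 1) := by positivity
      have hlog1 : Real.log ((k : ℝ) / ((k : ℝ) - 1)) ≤ (k : ℝ) / ((k : ℝ) - 1) - 1 :=
        Real.log_le_sub_one_of_pos hdivpos
      have heq : (k : ℝ) / ((k : ℝ) - 1) - 1 = 1 / ((k : ℝ) - 1) := by
        field_simp
        ring
      have hhalf : (n : ℝ) ≤ 2 * ((k : ℝ) - 1) := by
        have h1 : ((n : ℕ) : ℝ) ≤ ((2 * (k - 1) : ℕ) : ℝ) := by exact_mod_cast hk.2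
        have hk1 : 1 ≤ k := by omega
        push_cast [Nat.cast_sub hk1] at h1
        linarith
      have hlog2 : 1 / ((k : ℝ) - 1) ≤ 2 / (n : ℝ) := by
        rw [div_le_div_iff₀ hkp hn0]; linarith
      have hpnn : (0 : ℝ) ≤ ((n + 1 - k : ℕ) : ℝ) ^ (β - 1) :=
        Real.rpow_nonneg (Nat.cast_nonneg _) _
      apply mul_le_mul_of_nonneg_left _ hpnn
      calc Real.log ((k : ℝ) / ((k : ℝ) - 1)) ≤ 1 / ((k : ℝ) - 1) := by
            rw [← heq]; exact hlog1
        _ ≤ 2 / (n : ℝ) := hlog2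
    calc ∑ k ∈ (Finset.Icc 2 n).filter (fun k => n ≤ 2 * (k - 1)),
          ((n + 1 - k : ℕ) : ℝ) ^ (β - 1) * Real.log ((k : ℝ) / ((k : ℝ) - 1))
        ≤ ∑ k ∈ (Finset.Icc 2 n).filter (fun k => n ≤ 2 * (k - 1)),
          ((n + 1 - k : ℕ) : ℝ) ^ (β - 1) * (2 / (n : ℝ)) := Finset.sum_le_sum step1
      _ ≤ ∑ k ∈ Finset.Icc 2 n, ((n + 1 - k : ℕ) : ℝ) ^ (β - 1) * (2 / (n : ℝ)) := by
          apply Finset.sum_le_sum_of_subset_of_nonneg (Finset.filter_subset _ _)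
          intro k _ _
          have h0 : (0 : ℝ) ≤ ((n + 1 - k : ℕ) : ℝ) ^ (β - 1) :=
            Real.rpow_nonneg (Nat.cast_nonneg _) _
          positivity
      _ = (∑ k ∈ Finset.Icc 2 n, ((n + 1 - k : ℕ) : ℝ) ^ (β - 1)) * (2 / (n : ℝ)) := by
          rw [Finset.sum_mul]
      _ ≤ ((n : ℝ) ^ β / β) * (2 / (n : ℝ)) := by
          apply mul_le_mul_of_nonneg_right _ (by positivity)
          have hIcc : Finset.Icc 2 n = Finset.Ico 2 (n + 1) := by
            rw [Finset.Ico_add_one_right_eq_Icc]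
          rw [hIcc, Finset.sum_Ico_eq_sum_range]
          calc ∑ i ∈ range (n + 1 - 2), ((n + 1 - (2 + i) : ℕ) : ℝ) ^ (β - 1)
              = ∑ i ∈ range (n - 1), (((n - 1) - i : ℕ) : ℝ) ^ (β - 1) := by
                have h2 : n + 1 - 2 = n - 1 := by omega
                rw [h2]
                refine Finset.sum_congr rfl fun i hi => ?_
                congr 2
                simp only [mem_range] at hi
                omega
            _ ≤ ((n - 1 : ℕ) : ℝ) ^ β / β := sum_rev_le β hβ0 hβ1.le (n - 1)
            _ ≤ (n : ℝ) ^ β / β := by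
                gcongr
                exact_mod_cast Nat.sub_le n 1
      _ = (2 / β) * (n : ℝ) ^ (β - 1) := by
          rw [Real.rpow_sub_one hn0.ne' β]
          field_simp
  -- Part B : k with 2(k-1) < n
  have hB : ∑ k ∈ (Finset.Icc 2 n).filter (fun k => ¬ n ≤ 2 * (k - 1)),
      ((n + 1 - k : ℕ) : ℝ) ^ (β - 1) * Real.log ((k : ℝ) / ((k : ℝ) - 1))
      ≤ (2 * (n : ℝ) ^ (β - 1)) * Real.log (n : ℝ) := by
    have step1 : ∀ k ∈ (Finset.Icc 2 n).filter (fun k => ¬ n ≤ 2 * (k - 1)),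
        ((n + 1 - k : ℕ) : ℝ) ^ (β - 1) * Real.log ((k : ℝ) / ((k : ℝ) - 1))
        ≤ (2 * (n : ℝ) ^ (β - 1)) * Real.log ((k : ℝ) / ((k : ℝ) - 1)) := by
      intro k hk
      have hkmem : k ∈ Finset.Icc 2 n := Finset.mem_of_mem_filter k hk
      have hlg : 0 ≤ Real.log ((k : ℝ) / ((k : ℝ) - 1)) := hlogpos k hkmem
      refine mul_le_mul_of_nonneg_right ?_ hlg
      simp only [mem_filter, mem_Icc] at hk
      have hk2 : (2 : ℝ) ≤ (k : ℝ) := by exact_mod_cast hk.1.1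
      have hknat : 2 * k ≤ n + 1 := by omega
      have hknat' : (2 : ℝ) * (k : ℝ) ≤ (n : ℝ) + 1 := by exact_mod_cast hknat
      have hhalf : (n : ℝ) / 2 ≤ (n : ℝ) + 1 - (k : ℝ) := by linarith
      have hcastk := hcast k hkmem
      have h2 : ((n + 1 - k : ℕ) : ℝ) ^ (β - 1) ≤ ((n : ℝ) / 2) ^ (β - 1) := by
        rw [hcastk]
        exact Real.rpow_le_rpow_of_nonpos (by positivity) hhalf hβ1'
      have h3 : ((n : ℝ) / 2) ^ (β - 1) ≤ 2 * (n : ℝ) ^ (β - 1) := by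
        have e0 : ((n : ℝ) / 2) ^ (β - 1) = (n : ℝ) ^ (β - 1) * ((2 : ℝ) ^ (β - 1))⁻¹ := by
          rw [div_eq_mul_inv, Real.mul_rpow hn0.le (by positivity),
            Real.inv_rpow (by norm_num)]
        have e1 : ((2 : ℝ) ^ (β - 1))⁻¹ = (2 : ℝ) ^ (1 - β) := by
          rw [← Real.rpow_neg (by norm_num)]; ring_nf
        have e2 : (2 : ℝ) ^ (1 - β) ≤ 2 := by
          calc (2 : ℝ) ^ (1 - β) ≤ (2 : ℝ) ^ (1 : ℝ) :=
                Real.rpow_le_rpow_of_exponent_le (by norm_num) (by linarith)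
            _ = 2 := Real.rpow_one 2
        rw [e0, e1]
        calc (n : ℝ) ^ (β - 1) * (2 : ℝ) ^ (1 - β) ≤ (n : ℝ) ^ (β - 1) * 2 :=
              mul_le_mul_of_nonneg_left e2 hnp
          _ = 2 * (n : ℝ) ^ (β - 1) := by ring
      exact h2.trans h3
    calc ∑ k ∈ (Finset.Icc 2 n).filter (fun k => ¬ n ≤ 2 * (k - 1)),
          ((n + 1 - k : ℕ) : ℝ) ^ (β - 1) * Real.log ((k : ℝ) / ((k : ℝ) - 1))
        ≤ ∑ k ∈ (Finset.Icc 2 n).filter (fun k => ¬ n ≤ 2 * (k - 1)),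
          (2 * (n : ℝ) ^ (β - 1)) * Real.log ((k : ℝ) / ((k : ℝ) - 1)) :=
          Finset.sum_le_sum step1
      _ ≤ ∑ k ∈ Finset.Icc 2 n,
          (2 * (n : ℝ) ^ (β - 1)) * Real.log ((k : ℝ) / ((k : ℝ) - 1)) := by
          apply Finset.sum_le_sum_of_subset_of_nonneg (Finset.filter_subset _ _)
          intro k hk _
          exact mul_nonneg (by positivity) (hlogpos k hk)
      _ = (2 * (n : ℝ) ^ (β - 1)) * ∑ k ∈ Finset.Icc 2 n,
          Real.log ((k : ℝ) / ((k : ℝ) - 1)) := by rw [Finset.mul_sum]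
      _ = (2 * (n : ℝ) ^ (β - 1)) * Real.log (n : ℝ) := by rw [log_telescope n hn]
  -- log n ≤ |log T| + |log τ|
  have hlogn : Real.log (n : ℝ) ≤ |Real.log T| + |Real.log τ| := by
    have h1 : (n : ℝ) ≤ T / τ := by rw [le_div_iff₀ hτ0]; exact hnT
    have h2 : Real.log (n : ℝ) ≤ Real.log (T / τ) :=
      Real.log_le_log hn0 h1
    rw [Real.log_div hT.ne' hτ0.ne'] at h2
    have := le_abs_self (Real.log T)
    have := neg_le_abs (Real.log τ)
    linarith
  -- combine
  have hSeq : S = (∑ k ∈ (Finset.Icc 2 n).filter (fun k => n ≤ 2 * (k - 1)),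
      ((n + 1 - k : ℕ) : ℝ) ^ (β - 1) * Real.log ((k : ℝ) / ((k : ℝ) - 1)))
      + ∑ k ∈ (Finset.Icc 2 n).filter (fun k => ¬ n ≤ 2 * (k - 1)),
      ((n + 1 - k : ℕ) : ℝ) ^ (β - 1) * Real.log ((k : ℝ) / ((k : ℝ) - 1)) := by
    rw [hS, ← hfilter]
  have hB2 : (2 * (n : ℝ) ^ (β - 1)) * Real.log (n : ℝ)
      ≤ (2 * (n : ℝ) ^ (β - 1)) * (|Real.log T| + |Real.log τ|) :=
    mul_le_mul_of_nonneg_left hlogn (by positivity)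
  have hbpos : (0 : ℝ) < 2 / β := by positivity
  have haT : (0 : ℝ) ≤ |Real.log T| := abs_nonneg _
  have haτ : (0 : ℝ) ≤ |Real.log τ| := abs_nonneg _
  have hp1 : (0 : ℝ) ≤ (2 / β) * ((n : ℝ) ^ (β - 1) * |Real.log τ|) :=
    mul_nonneg hbpos.le (mul_nonneg hnp haτ)
  have hp2 : (0 : ℝ) ≤ (n : ℝ) ^ (β - 1) * (|Real.log T| * |Real.log τ|) :=
    mul_nonneg hnp (mul_nonneg haT haτ)
  rw [hSeq]
  nlinarith [hA, hB, hB2, hnp, hp1, hp2]
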